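/- arXiv:2005.08544 — 4 statements merged into one kernel-verified Lean document; each statement's English description precedes it below -/
import Mathlib

section
/- Let V and W be complex normed spaces equipped with seminorms L_V : V → [0,∞) and L_W : W → [0,∞). Let R : V → W and S : W → V be linear maps such that L_W(R v) ≤ L_V(v) for all v ∈ V and L_V(S w) ≤ L_W(w) for all w ∈ W, and suppose there is a constant γ' ≥ 0 such that ‖w − R(S w)‖ ≤ γ' · L_W(w) for all w ∈ W. For a seminorm L on a normed space E and continuous linear functionals φ, ψ on E, define d_L(φ, ψ) = sup { |φ(x) − ψ(x)| : x ∈ E, L(x) ≤ 1 } (a value in [0,∞]). Then for all continuous linear functionals φ, ψ on W with ‖φ‖ ≤ 1 and ‖ψ‖ ≤ 1 one has d_{L_V}(φ ∘ R, ψ ∘ R) ≤ d_{L_W}(φ, ψ) ≤ d_{L_V}(φ ∘ R, ψ ∘ R) + 2γ'. -/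
/-- Connes' distance function associated to a (Lipschitz) seminorm `L` on a normed space `E`:
`d_L(φ, ψ) = sup { |φ(x) − ψ(x)| : x ∈ E, L(x) ≤ 1 }`, valued in `[0,∞]`. -/
noncomputable def connesDist {E : Type*} [NormedAddCommGroup E]
    (L : E → ℝ) (φ ψ : E → ℂ) : ENNReal :=
  ⨆ x ∈ {x : E | L x ≤ 1}, (‖φ x - ψ x‖₊ : ENNReal)

/-- Proposition 2.3(1): if `R, S` are Lipschitz-contractive linear maps with
`‖w − R(S w)‖ ≤ γ' L_W(w)`, then for norm-`≤ 1` functionals `φ, ψ` on `W` one has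
`d_{L_V}(φ∘R, ψ∘R) ≤ d_{L_W}(φ, ψ) ≤ d_{L_V}(φ∘R, ψ∘R) + 2γ'`. -/
theorem connesDist_pullback_R {V W : Type*}
    [NormedAddCommGroup V] [NormedSpace ℂ V]
    [NormedAddCommGroup W] [NormedSpace ℂ W]
    (LV : Seminorm ℂ V) (LW : Seminorm ℂ W)
    (R : V →ₗ[ℂ] W) (S : W →ₗ[ℂ] V)
    (hR : ∀ v : V, LW (R v) ≤ LV v)
    (hS : ∀ w : W, LV (S w) ≤ LW w)
    (γ' : ℝ) (hγ' : 0 ≤ γ')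
    (happ : ∀ w : W, ‖w - R (S w)‖ ≤ γ' * LW w)
    (φ ψ : W →L[ℂ] ℂ) (hφ : ‖φ‖ ≤ 1) (hψ : ‖ψ‖ ≤ 1) :
    connesDist (fun v => LV v) (fun v => φ (R v)) (fun v => ψ (R v))
        ≤ connesDist (fun w => LW w) (fun w => φ w) (fun w => ψ w) ∧
    connesDist (fun w => LW w) (fun w => φ w) (fun w => ψ w)
        ≤ connesDist (fun v => LV v) (fun v => φ (R v)) (fun v => ψ (R v))
          + ENNReal.ofReal (2 * γ') := by
  constructor
  · refine iSup₂_le fun v hv => ?_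
    exact le_iSup₂_of_le (R v) ((hR v).trans hv) le_rfl
  · refine iSup₂_le fun w hw => ?_
    have hw1 : LW w ≤ 1 := hw
    -- bound on the defect
    have hdef : ‖w - R (S w)‖ ≤ γ' := (happ w).trans (by nlinarith)
    have hφd : ‖φ (w - R (S w))‖ ≤ γ' := by
      calc ‖φ (w - R (S w))‖ ≤ ‖φ‖ * ‖w - R (S w)‖ := φ.le_opNorm _
        _ ≤ 1 * γ' := by
            exact mul_le_mul hφ hdef (norm_nonneg _) zero_le_one
        _ = γ' := one_mul _
    have hψd : ‖ψ (w - R (S w))‖ ≤ γ' := by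
      calc ‖ψ (w - R (S w))‖ ≤ ‖ψ‖ * ‖w - R (S w)‖ := ψ.le_opNorm _
        _ ≤ 1 * γ' := by
            exact mul_le_mul hψ hdef (norm_nonneg _) zero_le_one
        _ = γ' := one_mul _
    have hreal : ‖φ w - ψ w‖ ≤ ‖φ (R (S w)) - ψ (R (S w))‖ + 2 * γ' := by
      have hdecomp : φ w - ψ w
          = (φ (R (S w)) - ψ (R (S w))) + (φ (w - R (S w)) - ψ (w - R (S w))) := by
        simp only [map_sub]; ring
      calc ‖φ w - ψ w‖
          ≤ ‖φ (R (S w)) - ψ (R (S w))‖ + ‖φ (w - R (S w)) - ψ (w - R (S w))‖ := by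
            rw [hdecomp]; exact norm_add_le _ _
        _ ≤ ‖φ (R (S w)) - ψ (R (S w))‖ + (γ' + γ') := by
            gcongr
            exact (norm_sub_le _ _).trans (add_le_add hφd hψd)
        _ = ‖φ (R (S w)) - ψ (R (S w))‖ + 2 * γ' := by ring
    calc (‖φ w - ψ w‖₊ : ENNReal)
        ≤ (‖φ (R (S w)) - ψ (R (S w))‖₊ : ENNReal) + ENNReal.ofReal (2 * γ') := by
          rw [← enorm_eq_nnnorm, ← enorm_eq_nnnorm, ← ofReal_norm, ← ofReal_norm,
            ← ENNReal.ofReal_add (norm_nonneg _) (by positivity)]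
          exact ENNReal.ofReal_le_ofReal hreal
      _ ≤ connesDist (fun v => LV v) (fun v => φ (R v)) (fun v => ψ (R v))
            + ENNReal.ofReal (2 * γ') := by
          gcongr
          exact le_iSup₂_of_le (S w) ((hS w).trans hw1) le_rfl
end

section
/- Let V and W be complex normed spaces equipped with seminorms L_V : V → [0,∞) and L_W : W → [0,∞). Let R : V → W and S : W → V be linear maps such that L_W(R v) ≤ L_V(v) for all v ∈ V and L_V(S w) ≤ L_W(w) for all w ∈ W, and suppose there is a constant γ ≥ 0 such that ‖v − S(R v)‖ ≤ γ · L_V(v) for all v ∈ V. For a seminorm L on a normed space E and continuous linear functionals φ, ψ on E, define d_L(φ, ψ) = sup { |φ(x) − ψ(x)| : x ∈ E, L(x) ≤ 1 } (a value in [0,∞]). Then for all continuous linear functionals φ, ψ on V with ‖φ‖ ≤ 1 and ‖ψ‖ ≤ 1 one has d_{L_W}(φ ∘ S, ψ ∘ S) ≤ d_{L_V}(φ, ψ) ≤ d_{L_W}(φ ∘ S, ψ ∘ S) + 2γ. -/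
/-- Proposition 2.3(2): if `R, S` are Lipschitz-contractive linear maps with
`‖v − S(R v)‖ ≤ γ L_V(v)`, then for norm-`≤ 1` functionals `φ, ψ` on `V` one has
`d_{L_W}(φ∘S, ψ∘S) ≤ d_{L_V}(φ, ψ) ≤ d_{L_W}(φ∘S, ψ∘S) + 2γ`. -/
theorem connesDist_pullback_S {V W : Type*}
    [NormedAddCommGroup V] [NormedSpace ℂ V]
    [NormedAddCommGroup W] [NormedSpace ℂ W]
    (LV : Seminorm ℂ V) (LW : Seminorm ℂ W)
    (R : V →ₗ[ℂ] W) (S : W →ₗ[ℂ] V)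
    (hR : ∀ v : V, LW (R v) ≤ LV v)
    (hS : ∀ w : W, LV (S w) ≤ LW w)
    (γ : ℝ) (hγ : 0 ≤ γ)
    (happ : ∀ v : V, ‖v - S (R v)‖ ≤ γ * LV v)
    (φ ψ : V →L[ℂ] ℂ) (hφ : ‖φ‖ ≤ 1) (hψ : ‖ψ‖ ≤ 1) :
    connesDist (fun w => LW w) (fun w => φ (S w)) (fun w => ψ (S w))
        ≤ connesDist (fun v => LV v) (fun v => φ v) (fun v => ψ v) ∧
    connesDist (fun v => LV v) (fun v => φ v) (fun v => ψ v)
        ≤ connesDist (fun w => LW w) (fun w => φ (S w)) (fun w => ψ (S w))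
          + ENNReal.ofReal (2 * γ) := by
  constructor
  · apply iSup₂_le
    intro w hw
    have hSw : LV (S w) ≤ 1 := le_trans (hS w) hw
    exact le_iSup₂ (f := fun x (_ : x ∈ {x : V | LV x ≤ 1}) => (‖φ x - ψ x‖₊ : ENNReal))
      (S w) hSw
  · apply iSup₂_le
    intro v hv
    have hv' : LV v ≤ 1 := hv
    have hRv : LW (R v) ≤ 1 := le_trans (hR v) hv'
    have key : (‖φ v - ψ v‖₊ : ENNReal)
        ≤ (‖φ (S (R v)) - ψ (S (R v))‖₊ : ENNReal) + ENNReal.ofReal (2 * γ) := by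
      rw [← ENNReal.ofReal_coe_nnreal, ← ENNReal.ofReal_coe_nnreal,
        ← ENNReal.ofReal_add (by positivity) (by positivity)]
      apply ENNReal.ofReal_le_ofReal
      simp only [coe_nnnorm]
      have hd : ‖v - S (R v)‖ ≤ γ := le_trans (happ v)
        (by nlinarith [apply_nonneg LV v])
      have hφd : ‖φ (v - S (R v))‖ ≤ γ := by
        calc ‖φ (v - S (R v))‖ ≤ ‖φ‖ * ‖v - S (R v)‖ := φ.le_opNorm _
        _ ≤ 1 * γ := by
            apply mul_le_mul hφ hd (norm_nonneg _) zero_le_one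
        _ = γ := one_mul γ
      have hψd : ‖ψ (v - S (R v))‖ ≤ γ := by
        calc ‖ψ (v - S (R v))‖ ≤ ‖ψ‖ * ‖v - S (R v)‖ := ψ.le_opNorm _
        _ ≤ 1 * γ := by
            apply mul_le_mul hψ hd (norm_nonneg _) zero_le_one
        _ = γ := one_mul γ
      have e1 : φ v - ψ v = (φ (S (R v)) - ψ (S (R v)))
          + φ (v - S (R v)) - ψ (v - S (R v)) := by
        simp only [map_sub]; ring
      calc ‖φ v - ψ v‖
          = ‖(φ (S (R v)) - ψ (S (R v))) + φ (v - S (R v)) - ψ (v - S (R v))‖ := by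
            rw [e1]
        _ ≤ ‖(φ (S (R v)) - ψ (S (R v))) + φ (v - S (R v))‖ + ‖ψ (v - S (R v))‖ :=
            norm_sub_le _ _
        _ ≤ ‖φ (S (R v)) - ψ (S (R v))‖ + ‖φ (v - S (R v))‖ + ‖ψ (v - S (R v))‖ := by
            gcongr; exact norm_add_le _ _
        _ ≤ ‖φ (S (R v)) - ψ (S (R v))‖ + 2 * γ := by linarith
    refine le_trans key (add_le_add ?_ le_rfl)
    exact le_iSup₂ (f := fun x (_ : x ∈ {x : W | LW x ≤ 1}) => (‖φ (S x) - ψ (S x)‖₊ : ENNReal))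
      (R v) hRv
end

section
/- Let n ≥ 1 and let T be any n×n complex matrix, with ‖T‖ its operator norm on ℓ². Define S_n(T)(x) = (1/n) Σ_{j,l=0}^{n−1} T_{jl} e^{i(j−l)x} and let δ_n(T) be the matrix with entries (j−l)·T_{jl}. Then: (a) sup_x |S_n(T)(x)| ≤ ‖T‖; and (b) sup_x |(1/n) Σ_{j,l=0}^{n−1} (j−l) T_{jl} e^{i(j−l)x}| ≤ ‖δ_n(T)‖, i.e. the derivative of S_n(T) has sup-norm at most ‖δ_n(T)‖. -/
open MeasureTheory

instance : Fact (0 < 2 * Real.pi) := ⟨by positivity⟩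

/-- The operator norm of an `n×n` complex matrix acting on `ℓ²`. -/
noncomputable def l2OpNorm {n : ℕ} (M : Matrix (Fin n) (Fin n) ℂ) : ℝ :=
  ‖Matrix.toEuclideanCLM (𝕜 := ℂ) M‖

/-- The map `S_n`: `S_n(T)(x) = (1/n) Σ_{j,l} T_{jl} e^{i(j−l)x}`. -/
noncomputable def symbolMap (n : ℕ) (T : Matrix (Fin n) (Fin n) ℂ) :
    AddCircle (2 * Real.pi) → ℂ :=
  fun x => (1 / (n : ℂ)) *
    ∑ j : Fin n, ∑ l : Fin n, T j l * fourier (((j : ℕ) : ℤ) - ((l : ℕ) : ℤ)) x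

/-- The matrix `δ_n(T)` with entries `(j−l)·T_{jl}`, i.e. the commutator `[P_n D P_n, T]`. -/
noncomputable def deltaMat (n : ℕ) (T : Matrix (Fin n) (Fin n) ℂ) :
    Matrix (Fin n) (Fin n) ℂ :=
  Matrix.of fun j l => (((((j : ℕ) : ℤ) - ((l : ℕ) : ℤ)) : ℤ) : ℂ) * T j l

set_option maxHeartbeats 800000 in
set_option synthInstance.maxHeartbeats 200000 in
lemma key (n : ℕ) (hn : 1 ≤ n) (T : Matrix (Fin n) (Fin n) ℂ) :
    (⨆ x : AddCircle (2 * Real.pi), ‖symbolMap n T x‖) ≤ l2OpNorm T := by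
  have hn0 : (0:ℝ) < n := by exact_mod_cast hn
  apply ciSup_le
  intro x
  set c : ℂ := (((Real.sqrt n)⁻¹ : ℝ) : ℂ)
  set ψ : EuclideanSpace ℂ (Fin n) :=
    (WithLp.equiv 2 (Fin n → ℂ)).symm (fun l => c * fourier (-((l : ℕ) : ℤ)) x) with hψ
  have hψnorm : ‖ψ‖ = 1 := by
    rw [EuclideanSpace.norm_eq]
    have : ∀ l : Fin n, ‖c * fourier (-((l : ℕ) : ℤ)) x‖ ^ 2 = (n:ℝ)⁻¹ := by
      intro l
      rw [norm_mul]
      have h1 : ‖fourier (-((l : ℕ) : ℤ)) x‖ = 1 := Circle.norm_coe _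
      have h2 : ‖c‖ = (Real.sqrt n)⁻¹ := by
        simp [c, abs_of_nonneg, Real.sqrt_nonneg]
      rw [h1, h2, mul_one, inv_pow, Real.sq_sqrt hn0.le]
    simp only [hψ, WithLp.equiv_symm_apply, PiLp.toLp_apply]
    rw [Finset.sum_congr rfl (fun l _ => this l)]
    rw [Finset.sum_const, Finset.card_univ, Fintype.card_fin, nsmul_eq_mul,
      mul_inv_cancel₀ hn0.ne', Real.sqrt_one]
  have hrep : symbolMap n T x = inner (𝕜 := ℂ) ψ (Matrix.toEuclideanCLM (𝕜 := ℂ) T ψ) := by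
    rw [hψ, WithLp.equiv_symm_apply, Matrix.toEuclideanCLM_toLp]
    rw [PiLp.inner_apply]
    simp only [PiLp.toLp_apply, RCLike.inner_apply', Matrix.toLin'_apply,
      Matrix.mulVec, dotProduct]
    simp only [map_mul, ← fourier_neg, neg_neg]
    rw [symbolMap]
    rw [Finset.mul_sum]
    apply Finset.sum_congr rfl
    intro j _
    rw [Finset.mul_sum, Finset.mul_sum]
    apply Finset.sum_congr rfl
    intro l _
    have hc : (starRingEnd ℂ) c = c := by simp [c]
    rw [hc]
    have hf : fourier (((j:ℕ):ℤ) - ((l:ℕ):ℤ)) x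
        = fourier ((j:ℕ):ℤ) x * fourier (-((l:ℕ):ℤ)) x := by
      rw [← fourier_add]; ring_nf
    have hcc : c * c = 1 / (n:ℂ) := by
      simp only [c, ← Complex.ofReal_mul, ← mul_inv, Real.mul_self_sqrt hn0.le]
      rw [one_div]
      push_cast
      ring
    calc (1/(n:ℂ)) * (T j l * fourier (((j:ℕ):ℤ) - ((l:ℕ):ℤ)) x)
        = (c * c) * (T j l * (fourier ((j:ℕ):ℤ) x * fourier (-((l:ℕ):ℤ)) x)) := by
          rw [hcc, hf]
      _ = c * fourier ((j:ℕ):ℤ) x * (T j l * (c * fourier (-((l:ℕ):ℤ)) x)) := by ring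
  rw [hrep]
  calc ‖inner (𝕜 := ℂ) ψ (Matrix.toEuclideanCLM (𝕜 := ℂ) T ψ)‖
      ≤ ‖ψ‖ * ‖Matrix.toEuclideanCLM (𝕜 := ℂ) T ψ‖ := norm_inner_le_norm _ _
    _ ≤ ‖ψ‖ * (‖Matrix.toEuclideanCLM (𝕜 := ℂ) T‖ * ‖ψ‖) := by
        exact mul_le_mul_of_nonneg_left (ContinuousLinearMap.le_opNorm _ _) (norm_nonneg _)
    _ = l2OpNorm T := by rw [hψnorm]; simp [l2OpNorm]

/-- Lemma 3.4 (matrix form): `sup_x |S_n(T)(x)| ≤ ‖T‖` and the derivative of `S_n(T)`,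
`(1/n) Σ_{j,l} i(j−l) T_{jl} e^{i(j−l)x}`, has sup-norm at most `‖δ_n(T)‖`. -/
theorem symbolMap_norm_le (n : ℕ) (hn : 1 ≤ n) (T : Matrix (Fin n) (Fin n) ℂ) :
    ((⨆ x : AddCircle (2 * Real.pi), ‖symbolMap n T x‖) ≤ l2OpNorm T) ∧
    ((⨆ x : AddCircle (2 * Real.pi),
        ‖(1 / (n : ℂ)) * ∑ j : Fin n, ∑ l : Fin n,
            (((((j : ℕ) : ℤ) - ((l : ℕ) : ℤ)) : ℤ) : ℂ) * T j l
              * fourier (((j : ℕ) : ℤ) - ((l : ℕ) : ℤ)) x‖)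
      ≤ l2OpNorm (deltaMat n T)) := by
  refine ⟨key n hn T, ?_⟩
  simpa only [symbolMap, deltaMat, Matrix.of_apply] using key n hn (deltaMat n T)
end

section
/- Let n ≥ 1 and let a_{−n+1}, …, a_{n−1} be complex numbers. Then sup_x | Σ_{k=−n+1}^{n−1} (|k|/n) · a_k · e^{ikx} | ≤ (√(2n−1)/n) · sup_x | Σ_{k=−n+1}^{n−1} k · a_k · e^{ikx} |, where the suprema are over x ∈ ℝ (equivalently over the circle AddCircle (2π)). In particular the constant γ′_n = √(2n−1)/n tends to 0 as n → ∞. -/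
open Filter

set_option maxHeartbeats 1000000 in
open MeasureTheory Real Complex in
/-- The unnumbered Lemma of Section 3.2: for a trigonometric polynomial with coefficients
`a_{−n+1}, …, a_{n−1}`,
`sup_x |Σ_k (|k|/n) a_k e^{ikx}| ≤ (√(2n−1)/n) · sup_x |Σ_k k a_k e^{ikx}|`,
and the constant `γ′_n = √(2n−1)/n` tends to `0`. -/
theorem fejerRiesz_estimate (n : ℕ) (hn : 1 ≤ n) (a : ℤ → ℂ) :
    ((⨆ x : ℝ, ‖∑ k ∈ Finset.Icc (-(n : ℤ) + 1) ((n : ℤ) - 1),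
          ((|k| : ℤ) : ℂ) / (n : ℂ) * a k * Complex.exp ((k : ℂ) * (x : ℂ) * Complex.I)‖)
      ≤ (Real.sqrt (2 * (n : ℝ) - 1) / (n : ℝ)) *
        ⨆ x : ℝ, ‖∑ k ∈ Finset.Icc (-(n : ℤ) + 1) ((n : ℤ) - 1),
            (k : ℂ) * a k * Complex.exp ((k : ℂ) * (x : ℂ) * Complex.I)‖) ∧
    Tendsto (fun m : ℕ => Real.sqrt (2 * (m : ℝ) - 1) / (m : ℝ)) atTop (nhds 0) := by
  constructor
  · haveI hT : Fact (0 < 2 * π) := ⟨Real.two_pi_pos⟩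
    set s : Finset ℤ := Finset.Icc (-(n : ℤ) + 1) ((n : ℤ) - 1) with hs
    set c : ℤ → ℂ := fun k => (k : ℂ) * a k with hc
    set g : ℝ → ℂ := fun x =>
      ∑ k ∈ s, (k : ℂ) * a k * Complex.exp ((k : ℂ) * (x : ℂ) * Complex.I) with hg
    have hexp : ∀ (k : ℤ) (x : ℝ), ‖Complex.exp ((k : ℂ) * (x : ℂ) * Complex.I)‖ = 1 := by
      intro k x
      rw [show ((k : ℂ) * (x : ℂ) * Complex.I) = (((k : ℝ) * x : ℝ) : ℂ) * Complex.I by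
        push_cast; ring]
      exact Complex.norm_exp_ofReal_mul_I _
    have hnormc : ∀ k : ℤ, ‖c k‖ = |(k : ℝ)| * ‖a k‖ := by
      intro k; rw [hc]; simp [norm_mul]
    have hbdd : BddAbove (Set.range fun x : ℝ => ‖g x‖) := by
      refine ⟨∑ k ∈ s, ‖c k‖, ?_⟩
      rintro - ⟨x, rfl⟩
      refine le_trans (norm_sum_le _ _) (Finset.sum_le_sum fun k hk => ?_)
      rw [hnormc, norm_mul, norm_mul, hexp, mul_one]
      simp
    set M : ℝ := ⨆ x : ℝ, ‖g x‖ with hM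
    have hM0 : 0 ≤ M := Real.iSup_nonneg fun x => norm_nonneg _
    have hgM : ∀ x : ℝ, ‖g x‖ ≤ M := fun x => le_ciSup hbdd x
    set F : C(AddCircle (2 * π), ℂ) := ∑ k ∈ s, c k • fourier k with hF
    have hFx : ∀ x : ℝ, F ((x : ℝ) : AddCircle (2 * π)) = g x := by
      intro x
      rw [hF, hg]
      simp only [ContinuousMap.coe_sum, ContinuousMap.coe_smul, Finset.sum_apply, Pi.smul_apply,
        smul_eq_mul]
      refine Finset.sum_congr rfl fun k hk => ?_
      rw [fourier_coe_apply]
      have hπ : (π : ℂ) ≠ 0 := Complex.ofReal_ne_zero.mpr Real.pi_ne_zero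
      have harg : 2 * (π : ℂ) * Complex.I * (k : ℂ) * (x : ℂ) / ((2 * π : ℝ) : ℂ)
          = (k : ℂ) * (x : ℂ) * Complex.I := by
        push_cast
        field_simp
        try ring
      rw [harg]
    have hFnorm : ‖F‖ ≤ M := by
      refine (ContinuousMap.norm_le _ hM0).mpr fun p => ?_
      induction p using QuotientAddGroup.induction_on with
      | H x => rw [hFx]; exact hgM x
    set FL : Lp ℂ 2 (AddCircle.haarAddCircle (T := 2 * π)) :=
      ContinuousMap.toLp (E := ℂ) 2 AddCircle.haarAddCircle ℂ F with hFLdef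
    have hFL : FL = ∑ k ∈ s, c k • fourierLp 2 k := by
      rw [hFLdef, hF, map_sum]
      exact Finset.sum_congr rfl fun k _ => (ContinuousMap.toLp 2 AddCircle.haarAddCircle ℂ).map_smul (c k) (fourier k)
    have hinner : ∀ k ∈ s, @inner ℂ _ _ (fourierLp 2 k) FL = c k := by
      intro k hk
      rw [hFL]
      exact orthonormal_fourier.inner_right_sum c hk
    have hbessel : ∑ k ∈ s, ‖c k‖ ^ 2 ≤ ‖FL‖ ^ 2 := by
      have h := Orthonormal.sum_inner_products_le (𝕜 := ℂ) FL (orthonormal_fourier) (s := s)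
      refine le_trans (le_of_eq ?_) h
      exact Finset.sum_congr rfl fun k hk => by rw [hinner k hk]
    have hFLnorm : ‖FL‖ ≤ M := by
      have h1 : ‖FL‖ ≤ ‖(ContinuousMap.toLp (E := ℂ) 2 (AddCircle.haarAddCircle (T := 2 * π)) ℂ :
          C(AddCircle (2 * π), ℂ) →L[ℂ] Lp ℂ 2 AddCircle.haarAddCircle)‖ * ‖F‖ :=
        ContinuousLinearMap.le_opNorm _ F
      have h2 : ‖(ContinuousMap.toLp (E := ℂ) 2 (AddCircle.haarAddCircle (T := 2 * π)) ℂ :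
          C(AddCircle (2 * π), ℂ) →L[ℂ] Lp ℂ 2 AddCircle.haarAddCircle)‖ ≤ 1 := by
        refine le_trans (ContinuousMap.toLp_norm_le _) ?_
        simp [measureUnivNNReal, measure_univ]
      calc ‖FL‖ ≤ _ * ‖F‖ := h1
        _ ≤ 1 * ‖F‖ := mul_le_mul_of_nonneg_right h2 (norm_nonneg _)
        _ = ‖F‖ := one_mul _
        _ ≤ M := hFnorm
    have hsum : ∑ k ∈ s, ‖c k‖ ^ 2 ≤ M ^ 2 :=
      le_trans hbessel (pow_le_pow_left₀ (norm_nonneg _) hFLnorm 2)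
    have hcard : ((s.card : ℝ)) = 2 * (n : ℝ) - 1 := by
      have h1 : ((s.card : ℤ)) = 2 * (n : ℤ) - 1 := by
        rw [hs, Int.card_Icc_of_le (a := -(n:ℤ)+1) (b := (n:ℤ)-1) (by omega)]
        ring
      have h2 := congrArg (fun z : ℤ => (z : ℝ)) h1
      push_cast at h2 ⊢
      linarith
    have hn' : (0 : ℝ) < n := by positivity
    have hnn : (0 : ℝ) ≤ 2 * (n : ℝ) - 1 := by
      have : (1 : ℝ) ≤ n := by exact_mod_cast hn
      linarith
    have hCS : ∑ k ∈ s, ‖c k‖ ≤ Real.sqrt (2 * (n : ℝ) - 1) * M := by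
      have h1 : (∑ k ∈ s, ‖c k‖) ^ 2 ≤ (s.card : ℝ) * ∑ k ∈ s, ‖c k‖ ^ 2 :=
        sq_sum_le_card_mul_sum_sq
      have h2 : ∑ k ∈ s, ‖c k‖ ≤ Real.sqrt ((s.card : ℝ) * ∑ k ∈ s, ‖c k‖ ^ 2) := by
        rw [← Real.sqrt_sq (Finset.sum_nonneg fun k _ => norm_nonneg _)]
        exact Real.sqrt_le_sqrt h1
      refine h2.trans ?_
      rw [hcard]
      calc Real.sqrt ((2 * (n : ℝ) - 1) * ∑ k ∈ s, ‖c k‖ ^ 2)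
          ≤ Real.sqrt ((2 * (n : ℝ) - 1) * M ^ 2) := by
            refine Real.sqrt_le_sqrt ?_
            exact mul_le_mul_of_nonneg_left hsum hnn
        _ = Real.sqrt (2 * (n : ℝ) - 1) * M := by
            rw [Real.sqrt_mul hnn, Real.sqrt_sq hM0]
    have hpt : ∀ x : ℝ,
        ‖∑ k ∈ s, ((|k| : ℤ) : ℂ) / (n : ℂ) * a k * Complex.exp ((k : ℂ) * (x : ℂ) * Complex.I)‖
          ≤ Real.sqrt (2 * (n : ℝ) - 1) / (n : ℝ) * M := by
      intro x
      have hterm : ∀ k ∈ s,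
          ‖((|k| : ℤ) : ℂ) / (n : ℂ) * a k * Complex.exp ((k : ℂ) * (x : ℂ) * Complex.I)‖
            = ‖c k‖ / n := by
        intro k hk
        have hA : ‖((|k| : ℤ) : ℂ)‖ = |(k : ℝ)| := by
          simp [Int.cast_abs, _root_.abs_abs]
        rw [norm_mul, norm_mul, hexp, mul_one, norm_div, hA, hnormc]
        simp only [Complex.norm_natCast]
        ring
      calc ‖∑ k ∈ s, ((|k| : ℤ) : ℂ) / (n : ℂ) * a k * Complex.exp ((k : ℂ) * (x : ℂ) *
              Complex.I)‖
          ≤ ∑ k ∈ s, ‖((|k| : ℤ) : ℂ) / (n : ℂ) * a k * Complex.exp ((k : ℂ) * (x : ℂ) *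
              Complex.I)‖ := norm_sum_le _ _
        _ = (∑ k ∈ s, ‖c k‖) / n := by
            rw [Finset.sum_div]; exact Finset.sum_congr rfl hterm
        _ ≤ (Real.sqrt (2 * (n : ℝ) - 1) * M) / n := by gcongr
        _ = Real.sqrt (2 * (n : ℝ) - 1) / (n : ℝ) * M := by ring
    refine Real.iSup_le hpt ?_
    have h0 : 0 ≤ Real.sqrt (2 * (n : ℝ) - 1) / (n : ℝ) := by positivity
    exact mul_nonneg h0 hM0
  · have h1 : Tendsto (fun m : ℕ => Real.sqrt (2 / (m : ℝ))) atTop (nhds 0) := by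
      have h := (tendsto_const_div_atTop_nhds_zero_nat 2).sqrt
      simpa using h
    refine squeeze_zero (fun m => by positivity) (fun m => ?_) h1
    rcases Nat.eq_zero_or_pos m with rfl | hm
    · simp
    · have hm' : (0 : ℝ) < m := by exact_mod_cast hm
      have e2 : Real.sqrt (2 * (m : ℝ)) / m = Real.sqrt (2 / (m : ℝ)) := by
        rw [show (2 : ℝ) / (m : ℝ) = (2 * m) / (m : ℝ) ^ 2 by field_simp,
          Real.sqrt_div (by positivity), Real.sqrt_sq hm'.le]
      calc Real.sqrt (2 * (m : ℝ) - 1) / m ≤ Real.sqrt (2 * (m : ℝ)) / m := by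
            gcongr
            linarith
        _ = Real.sqrt (2 / (m : ℝ)) := e2
end
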